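/- Let p be a prime, let S be a finite commutative semigroup such that exp(S) is a power of p, and let R be a commutative unitary ring of characteristic p. Then d(S,R) ≤ Λ(S) − 1. -/

import Mathlib

namespace ZS

variable (S : Type*) [AddCommSemigroup S]

/-- `nsmul' n x = (n+1)·x`, iterated addition in a semigroup. -/
def nsmul' : ℕ → S → S
  | 0, x => x
  | n + 1, x => x + nsmul' n x

/-- The cyclic subsemigroup `⟨x⟩ = {x, 2x, 3x, …}` generated by `x`. -/
def cyc (x : S) : Set S := Set.range fun n => nsmul' S n x

/-- `x` is periodic if `⟨x⟩` is finite. -/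
def IsPeriodicElem (x : S) : Prop := (cyc S x).Finite

/-- A semigroup is periodic if every element is periodic. -/
def IsPeriodicSemigroup : Prop := ∀ x : S, IsPeriodicElem S x

/-- `ρ(x)`: the least `m ≥ 1` such that `m·x` is idempotent (equivalently `m·x = e(x)`). -/
noncomputable def rho (x : S) : ℕ :=
  sInf {n : ℕ | nsmul' S n x + nsmul' S n x = nsmul' S n x} + 1

/-- `e(x)`: the unique idempotent of the finite cyclic semigroup `⟨x⟩`. -/
noncomputable def eIdem (x : S) : S :=
  nsmul' S (sInf {n : ℕ | nsmul' S n x + nsmul' S n x = nsmul' S n x}) x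

/-- The period of a (periodic) element `x`: the least `n > 0` with `(m+n)x = mx` for some `m`. -/
noncomputable def period (x : S) : ℕ :=
  sInf {n : ℕ | 0 < n ∧ ∃ m : ℕ, nsmul' S (m + n) x = nsmul' S m x}

/-- The index of a (periodic) element `x`: the least `k ≥ 1` with `kx = tx` for some `t ≠ k`. -/
noncomputable def indexOf (x : S) : ℕ :=
  sInf {k : ℕ | ∃ t : ℕ, t ≠ k ∧ nsmul' S k x = nsmul' S t x} + 1

/-- `exp(S)`: the lcm of the periods of the elements of `S`, described as the least positive
common multiple of all the periods. -/
noncomputable def expS : ℕ := sInf {n : ℕ | 0 < n ∧ ∀ x : S, period S x ∣ n}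

/-- `K` is a splitting field for exponent `n`: it contains exactly `n` `n`-th roots of unity. -/
def SplitField (K : Type*) [Field K] (n : ℕ) : Prop := Set.ncard {ζ : K | ζ ^ n = 1} = n

/-- Green's preorder `a ≼_𝓗 b`. -/
def gLe (a b : S) : Prop := a = b ∨ ∃ c : S, a = b + c

/-- Green's congruence `a 𝓗 b`. -/
def gEq (a b : S) : Prop := gLe S a b ∧ gLe S b a

/-- `a ≺_𝓗 b`. -/
def gLt (a b : S) : Prop := gLe S a b ∧ ¬ gLe S b a

/-- The Green class `H_a`. -/
def HClass (a : S) : Set S := {x : S | gEq S x a}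

/-- The stabilizer `St(H_a)` of the Green class of `a`. -/
def stab (a : S) : Set S := {c : S | ∀ x ∈ HClass S a, c + x ∈ HClass S a}

theorem gLe_trans {a b c : S} (h1 : gLe S a b) (h2 : gLe S b c) : gLe S a c := by
  rcases h1 with rfl | ⟨u, rfl⟩
  · exact h2
  · rcases h2 with rfl | ⟨v, rfl⟩
    · exact Or.inr ⟨u, rfl⟩
    · exact Or.inr ⟨v + u, by rw [add_assoc]⟩

theorem gLe_add_right {a b : S} (x : S) (h : gLe S a b) : gLe S (a + x) (b + x) := by
  rcases h with rfl | ⟨c, rfl⟩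
  · exact Or.inl rfl
  · exact Or.inr ⟨c, by rw [add_right_comm]⟩

theorem gEq_add {w x y z : S} (h1 : gEq S w x) (h2 : gEq S y z) : gEq S (w + y) (x + z) := by
  have k1 : gLe S (w + y) (x + y) := gLe_add_right S y h1.1
  have k2 : gLe S (x + y) (x + z) := by
    have h := gLe_add_right S x h2.1
    rwa [add_comm z x, add_comm y x] at h
  have k3 : gLe S (x + z) (w + z) := gLe_add_right S z h1.2
  have k4 : gLe S (w + z) (w + y) := by
    have h := gLe_add_right S w h2.2
    rwa [add_comm z w, add_comm y w] at h
  exact ⟨gLe_trans S k1 k2, gLe_trans S k3 k4⟩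

/-- Green's congruence as an additive congruence. -/
def greenCon : AddCon S where
  r a b := gEq S a b
  iseqv := ⟨fun _ => ⟨Or.inl rfl, Or.inl rfl⟩, fun h => ⟨h.2, h.1⟩,
    fun h1 h2 => ⟨gLe_trans S h1.1 h2.1, gLe_trans S h2.2 h1.2⟩⟩
  add' h1 h2 := gEq_add S h1 h2

/-- The quotient semigroup `S/𝓗`. -/
abbrev GQuot := (greenCon S).Quotient

/-- The canonical epimorphism `S → S/𝓗`, `a ↦ ā`. -/
def gq (a : S) : GQuot S := (a : (greenCon S).Quotient)

/-- The sum of a sequence (multiset) of elements of `S`, computed in `WithZero S`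
(the empty sequence having sum the adjoined zero). -/
def msum (T : Multiset S) : WithZero S := (T.map fun x => (x : WithZero S)).sum

/-- A sequence over a commutative semigroup is (additively) reducible if some proper
(possibly empty) subsequence has the same sum; the empty sequence has sum the identity of `S`,
when `S` has one. -/
def IsReducible (T : Multiset S) : Prop :=
  (∃ T' : Multiset S, T' ≤ T ∧ T' ≠ T ∧ T' ≠ 0 ∧ msum S T' = msum S T) ∨
    (T ≠ 0 ∧ ∃ z : S, msum S T = ↑z ∧ ∀ s : S, z + s = s)

/-- The Davenport constant `D(S)` of a commutative semigroup. -/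
noncomputable def Dav : ℕ∞ :=
  sInf {n : ℕ∞ | ∀ T : Multiset S, (T.card : ℕ∞) ≥ n → IsReducible S T}

/-- The relative Davenport constant `D_a(S)`: the largest length of an additively
irreducible sequence with sum `a`. -/
noncomputable def Drel (a : S) : ℕ∞ :=
  sSup {n : ℕ∞ | ∃ T : Multiset S,
    T ≠ 0 ∧ ¬ IsReducible S T ∧ msum S T = ↑a ∧ n = (T.card : ℕ∞)}

/-- The Erdős–Burgess constant `I(S)`: the smallest `ℓ` such that every sequence over `S` of
length (at least) `ℓ` has a nonempty subsequence with idempotent sum. -/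
noncomputable def EB : ℕ∞ :=
  sInf {n : ℕ∞ | ∀ T : Multiset S, (T.card : ℕ∞) ≥ n →
    ∃ T' : Multiset S, T' ≤ T ∧ T' ≠ 0 ∧ ∃ x : S, msum S T' = ↑x ∧ x + x = x}

/-- The Davenport constant of a (semigroup which is a) group: the smallest `ℓ` such that every
sequence of length (at least) `ℓ` has a nonempty subsequence whose sum is the identity element. -/
noncomputable def DavGrpSet : ℕ∞ :=
  sInf {n : ℕ∞ | ∀ T : Multiset S, (T.card : ℕ∞) ≥ n →
    ∃ T' : Multiset S, T' ≤ T ∧ T' ≠ 0 ∧ ∃ z : S, msum S T' = ↑z ∧ ∀ x : S, z + x = x}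

/-- The Davenport constant of a finite abelian group. -/
noncomputable def DavG (G : Type*) [AddCommMonoid G] : ℕ∞ :=
  sInf {n : ℕ∞ | ∀ T : Multiset G, (T.card : ℕ∞) ≥ n →
    ∃ T' : Multiset G, T' ≤ T ∧ T' ≠ 0 ∧ T'.sum = 0}

/-- `ψ(a)`: the largest length of a strictly ascending chain of principal ideals starting at
`(a)`. -/
noncomputable def psi (a : S) : ℕ∞ :=
  sSup {n : ℕ∞ | ∃ ℓ : ℕ, n = (ℓ : ℕ∞) ∧
    ∃ c : ℕ → S, c 0 = a ∧ ∀ i < ℓ, gLt S (c i) (c (i + 1))}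

/-- `Ψ(S)`: the largest length of a strictly ascending chain of principal ideals of `S`. -/
noncomputable def PsiS : ℕ∞ := ⨆ a : S, psi S a

/-- A subset of a semigroup which is a subgroup: closed under addition, with an identity
and inverses. -/
def IsSubgroupSet (T : Set S) : Prop :=
  (∀ x ∈ T, ∀ y ∈ T, x + y ∈ T) ∧
    ∃ z ∈ T, (∀ x ∈ T, z + x = x) ∧ ∀ x ∈ T, ∃ y ∈ T, x + y = z

open Classical in
/-- `ε_a`: `0` if `⟨a⟩` is a group, `1` otherwise. -/
noncomputable def eps (a : S) : ℕ∞ := if IsSubgroupSet S (cyc S a) then 0 else 1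

/-- The Schützenberger maps on the Green class `H_a`: maps `x ↦ c + x` for `c ∈ St(H_a)`. -/
def GammaSet (a : S) : Set (↥(HClass S a) → ↥(HClass S a)) :=
  {f | ∃ c ∈ stab S a, ∀ x : ↥(HClass S a), (↑(f x) : S) = c + ↑x}

/-- The Schützenberger group `Γ(H_a)` (as a type; it is empty when `St(H_a) = ∅`). -/
def Gamma (a : S) : Type _ := ↥(GammaSet S a)

instance (a : S) : Add (Gamma S a) :=
  ⟨fun f g => ⟨f.1 ∘ g.1, by
    obtain ⟨c, hc, hfc⟩ := f.2
    obtain ⟨d, hd, hgd⟩ := g.2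
    refine ⟨c + d, fun x hx => by rw [add_assoc]; exact hc _ (hd x hx), fun x => ?_⟩
    show (↑(f.1 (g.1 x)) : S) = c + d + ↑x
    rw [hfc (g.1 x), hgd x, add_assoc]⟩⟩

instance (a : S) : AddCommSemigroup (Gamma S a) where
  add_assoc f g h := Subtype.ext rfl
  add_comm f g := by
    obtain ⟨c, hc, hfc⟩ := f.2
    obtain ⟨d, hd, hgd⟩ := g.2
    apply Subtype.ext
    funext x
    apply Subtype.ext
    show (↑(f.1 (g.1 x)) : S) = ↑(g.1 (f.1 x))
    rw [hfc (g.1 x), hgd x, hgd (f.1 x), hfc x, add_left_comm]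

/-- `St(H_a)` as a subsemigroup of `S`. -/
def stabSub (a : S) : AddSubsemigroup S where
  carrier := stab S a
  add_mem' := fun {c d} hc hd x hx => by rw [add_assoc]; exact hc _ (hd x hx)

/-- The canonical surjection `π_a : St(H_a) → Γ(H_a)`, `c ↦ γ_c`. -/
def gammaMap (a : S) (c : ↥(stabSub S a)) : Gamma S a :=
  ⟨fun x => ⟨(↑c : S) + ↑x, c.2 ↑x x.2⟩, ⟨↑c, c.2, fun _ => rfl⟩⟩

/-- The semigroup algebra `R[X;S]` of a commutative semigroup, realized inside the monoid
algebra of the monoid obtained from `S` by adjoining an identity element. -/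
abbrev SAlg (R : Type*) [CommRing R] (S : Type*) [AddCommSemigroup S] :=
  AddMonoidAlgebra R (WithZero S)

/-- The monomial `r·X^s` of the semigroup algebra. -/
noncomputable def Xm (R : Type*) [CommRing R] {S : Type*} [AddCommSemigroup S] (s : S) (r : R) :
    SAlg R S := AddMonoidAlgebra.single (↑s) r

/-- The factor `X^s - a·X^{e(s)}` of the semigroup algebra. -/
noncomputable def facX (R : Type*) [CommRing R] {S : Type*} [AddCommSemigroup S]
    (s : S) (a : R) : SAlg R S := Xm R s 1 - Xm R (eIdem S s) a

/-- The invariant `d(S,R)`: the supremum of all `ℓ` such that some sequence `s_1,…,s_ℓ` over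
`S` satisfies `(X^{s_1} - a_1 X^{e(s_1)}) ⋯ (X^{s_ℓ} - a_ℓ X^{e(s_ℓ)}) ≠ 0` in `R[X;S]` for all
nonzero `a_1, …, a_ℓ ∈ R`. -/
noncomputable def dd (R : Type*) [CommRing R] (S : Type*) [AddCommSemigroup S] : ℕ∞ :=
  sSup {n : ℕ∞ | ∃ ℓ : ℕ, n = (ℓ : ℕ∞) ∧ ∃ s : Fin ℓ → S,
    ∀ a : Fin ℓ → R, (∀ i, a i ≠ 0) → ∏ i, facX R (s i) (a i) ≠ 0}

/-- `Λ(S)`: the minimum over all generating sets `A` of `S` of `1 + Σ_{a∈A} (ρ(a)-1)`. -/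
noncomputable def Lam (S : Type*) [AddCommSemigroup S] : ℕ :=
  sInf {n : ℕ | ∃ A : Finset S,
    AddSubsemigroup.closure (↑A : Set S) = ⊤ ∧ n = 1 + ∑ a ∈ A, (rho S a - 1)}

/-- An elementary semigroup: an ideal extension of a nilsemigroup `N` by a group with zero
`G ∪ {∞}`. -/
def IsElementary : Prop :=
  ∃ G N : Set S, G ∪ N = Set.univ ∧ Disjoint G N ∧ IsSubgroupSet S G ∧
    (∀ x ∈ N, ∀ s : S, s + x ∈ N) ∧
    ∃ z ∈ N, (∀ s : S, s + z = z) ∧ ∀ x ∈ N, ∃ n : ℕ, nsmul' S n x = z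


namespace Aux

variable {S}

lemma nsmul'_add (x : S) (m n : ℕ) :
    nsmul' S (m + n + 1) x = nsmul' S m x + nsmul' S n x := by
  induction n with
  | zero => show x + nsmul' S m x = _; rw [add_comm]; rfl
  | succ n ih =>
      show x + nsmul' S (m + n + 1) x = _
      rw [ih, add_left_comm]
      rfl

lemma nsmul'_add_distrib (x y : S) (n : ℕ) :
    nsmul' S n (x + y) = nsmul' S n x + nsmul' S n y := by
  induction n with
  | zero => rfl
  | succ n ih =>
      show (x + y) + nsmul' S n (x + y) = (x + nsmul' S n x) + (y + nsmul' S n y)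
      rw [ih, add_add_add_comm]

lemma shift_of_base {x : S} {m d : ℕ} (h : nsmul' S (m + d) x = nsmul' S m x) (c : ℕ) :
    nsmul' S (m + c + d) x = nsmul' S (m + c) x := by
  cases c with
  | zero => simpa using h
  | succ c =>
      have h1 : m + (c + 1) + d = (m + d) + c + 1 := by ring
      have h2 : m + (c + 1) = m + c + 1 := by ring
      rw [h1, h2, nsmul'_add, nsmul'_add, h]

lemma shift_of_base_mul {x : S} {m d : ℕ} (h : nsmul' S (m + d) x = nsmul' S m x)
    (c k : ℕ) : nsmul' S (m + c + k * d) x = nsmul' S (m + c) x := by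
  induction k with
  | zero => simp
  | succ k ih =>
      have : m + c + (k + 1) * d = m + (c + k * d) + d := by ring
      rw [this, shift_of_base h (c + k * d), ← add_assoc, ih]

section Finite

variable [Finite S]

lemma period_set_nonempty (x : S) :
    {n : ℕ | 0 < n ∧ ∃ m : ℕ, nsmul' S (m + n) x = nsmul' S m x}.Nonempty := by
  obtain ⟨i, j, hne, hij⟩ := Finite.exists_ne_map_eq_of_infinite (fun n : ℕ => nsmul' S n x)
  rcases Nat.lt_or_ge i j with h | h
  · exact ⟨j - i, Nat.sub_pos_of_lt h, i, by rw [Nat.add_sub_cancel' h.le]; exact hij.symm⟩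
  · have h' : j < i := lt_of_le_of_ne h hne.symm
    exact ⟨i - j, Nat.sub_pos_of_lt h', j, by rw [Nat.add_sub_cancel' h'.le]; exact hij⟩

lemma period_pos (x : S) : 0 < period S x :=
  (Nat.sInf_mem (period_set_nonempty x)).1

lemma period_witness (x : S) : ∃ m, nsmul' S (m + period S x) x = nsmul' S m x :=
  (Nat.sInf_mem (period_set_nonempty x)).2

lemma period_dvd {x : S} {n m : ℕ} (hn : 0 < n) (h : nsmul' S (m + n) x = nsmul' S m x) :
    period S x ∣ n := by
  set π := period S x with hπ
  obtain ⟨m₀, hm₀⟩ := period_witness x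
  have hr : n % π < π := Nat.mod_lt _ (period_pos x)
  rcases Nat.eq_zero_or_pos (n % π) with h0 | hpos
  · exact Nat.dvd_of_mod_eq_zero h0
  · exfalso
    -- build witness for n % π
    have key : nsmul' S ((m + m₀) + n % π) x = nsmul' S (m + m₀) x := by
      have e1 : nsmul' S ((m + m₀) + n % π + (n / π) * π) x
          = nsmul' S ((m + m₀) + n % π) x := by
        have := shift_of_base_mul (x := x) (m := m₀) (d := π) hm₀ (m + n % π) (n / π)
        calc nsmul' S ((m + m₀) + n % π + (n / π) * π) x
            = nsmul' S (m₀ + (m + n % π) + (n / π) * π) x := by ring_nf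
          _ = nsmul' S (m₀ + (m + n % π)) x := this
          _ = nsmul' S ((m + m₀) + n % π) x := by ring_nf
      have e2 : (m + m₀) + n % π + (n / π) * π = (m + m₀) + n := by
        have h4 := Nat.mod_add_div n π
        have h5 : (n / π) * π = π * (n / π) := Nat.mul_comm _ _
        omega
      have e3 : nsmul' S ((m + m₀) + n) x = nsmul' S (m + m₀) x := by
        have := shift_of_base (x := x) (m := m) (d := n) h m₀
        calc nsmul' S ((m + m₀) + n) x = nsmul' S (m + m₀ + n) x := rfl
          _ = nsmul' S (m + m₀) x := this
      rw [← e1, e2, e3]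
    have : π ≤ n % π := Nat.sInf_le ⟨hpos, _, key⟩
    omega


lemma idem_set_nonempty (x : S) :
    {n : ℕ | nsmul' S n x + nsmul' S n x = nsmul' S n x}.Nonempty := by
  obtain ⟨m₀, hm₀⟩ := period_witness x
  set π := period S x with hπ
  refine ⟨π * (m₀ + 1) - 1, ?_⟩
  have hπ0 : 0 < π := period_pos x
  have hge : m₀ + 1 ≤ π * (m₀ + 1) := Nat.le_mul_of_pos_left _ hπ0
  set n := π * (m₀ + 1) - 1 with hn
  have hn1 : n + 1 = π * (m₀ + 1) := by omega
  have hmain : nsmul' S (n + (n + 1)) x = nsmul' S n x := by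
    have hnm : m₀ ≤ n := by omega
    have := shift_of_base_mul (x := x) (m := m₀) (d := π) hm₀ (n - m₀) (m₀ + 1)
    have e1 : m₀ + (n - m₀) = n := by omega
    rw [e1] at this
    calc nsmul' S (n + (n + 1)) x = nsmul' S (n + (m₀ + 1) * π) x := by
          rw [hn1]; ring_nf
      _ = nsmul' S n x := this
  show nsmul' S n x + nsmul' S n x = nsmul' S n x
  rw [← nsmul'_add, show n + n + 1 = n + (n + 1) from by ring, hmain]

lemma eIdem_spec (x : S) : eIdem S x + eIdem S x = eIdem S x :=
  Nat.sInf_mem (idem_set_nonempty x)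

lemma rho_sub_one (x : S) :
    rho S x - 1 = sInf {n : ℕ | nsmul' S n x + nsmul' S n x = nsmul' S n x} := by
  simp [rho]

lemma eIdem_eq (x : S) : eIdem S x = nsmul' S (rho S x - 1) x := by
  rw [rho_sub_one]; rfl

lemma rho_pos (x : S) : 0 < rho S x := Nat.succ_pos _

lemma period_dvd_rho (x : S) : period S x ∣ rho S x := by
  set r := rho S x - 1 with hr
  have hidem : nsmul' S r x + nsmul' S r x = nsmul' S r x := by
    rw [hr, rho_sub_one]; exact Nat.sInf_mem (idem_set_nonempty x)
  have h : nsmul' S (r + (r + 1)) x = nsmul' S r x := by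
    rw [← nsmul'_add] at hidem
    rw [show r + (r + 1) = r + r + 1 from by ring]
    exact hidem
  have : rho S x = r + 1 := rfl
  rw [this]
  exact period_dvd (Nat.succ_pos r) h

lemma shift_rho {x : S} (c k : ℕ) :
    nsmul' S ((rho S x - 1) + c + k * rho S x) x = nsmul' S ((rho S x - 1) + c) x := by
  set r := rho S x - 1 with hr
  have hidem : nsmul' S r x + nsmul' S r x = nsmul' S r x := by
    rw [hr, rho_sub_one]; exact Nat.sInf_mem (idem_set_nonempty x)
  have h : nsmul' S (r + (r + 1)) x = nsmul' S r x := by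
    rw [← nsmul'_add] at hidem
    rw [show r + (r + 1) = r + r + 1 from by ring]
    exact hidem
  have hrr : rho S x = r + 1 := rfl
  rw [hrr]
  exact shift_of_base_mul h c k

lemma shift_period_of_rho_le {x : S} (c : ℕ) :
    nsmul' S ((rho S x - 1) + c + period S x) x = nsmul' S ((rho S x - 1) + c) x := by
  set r := rho S x - 1 with hr
  set π := period S x with hπ
  set ρ := rho S x with hρ
  obtain ⟨m₀, hm₀⟩ := period_witness x
  have e1 : nsmul' S (r + c + π + m₀ * ρ) x = nsmul' S (r + c + π) x := by
    have := shift_rho (x := x) (c + π) m₀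
    calc nsmul' S (r + c + π + m₀ * ρ) x = nsmul' S (r + (c + π) + m₀ * ρ) x := by ring_nf
      _ = nsmul' S (r + (c + π)) x := this
      _ = nsmul' S (r + c + π) x := by ring_nf
  have hρ1 : 1 ≤ ρ := rho_pos x
  have e2 : nsmul' S (r + c + π + m₀ * ρ) x = nsmul' S (r + c + m₀ * ρ) x := by
    have hbig : m₀ ≤ r + c + m₀ * ρ := by
      have : m₀ * 1 ≤ m₀ * ρ := Nat.mul_le_mul_left _ hρ1
      omega
    have := shift_of_base (x := x) (m := m₀) (d := π) hm₀ (r + c + m₀ * ρ - m₀)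
    have e : m₀ + (r + c + m₀ * ρ - m₀) = r + c + m₀ * ρ := by omega
    rw [e] at this
    calc nsmul' S (r + c + π + m₀ * ρ) x = nsmul' S (r + c + m₀ * ρ + π) x := by ring_nf
      _ = nsmul' S (r + c + m₀ * ρ) x := this
  have e3 : nsmul' S (r + c + m₀ * ρ) x = nsmul' S (r + c) x := shift_rho c m₀
  rw [← e3, ← e2, e1]

lemma nsmul'_congr_mod {x : S} {m m' : ℕ} (hm : rho S x - 1 ≤ m) (hm' : rho S x - 1 ≤ m')
    (h : m % period S x = m' % period S x) : nsmul' S m x = nsmul' S m' x := by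
  set r := rho S x - 1
  set π := period S x
  have key : ∀ c k : ℕ, nsmul' S (r + c + k * π) x = nsmul' S (r + c) x := by
    intro c k
    induction k with
    | zero => simp
    | succ k ih =>
        have e : r + c + (k + 1) * π = r + (c + k * π) + π := by ring
        rw [e]
        have := shift_period_of_rho_le (x := x) (c + k * π)
        rw [this]
        have e2 : r + (c + k * π) = r + c + k * π := by ring
        rw [e2, ih]
    -- done
  wlog hle : m ≤ m' generalizing m m'
  · exact (this hm' hm h.symm (by omega)).symm
  obtain ⟨d, rfl⟩ : ∃ d, m' = m + d := ⟨m' - m, by omega⟩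
  have hd : π ∣ d := by
    have := (Nat.modEq_iff_dvd' (Nat.le_add_right m d)).mp h
    simpa using this
  obtain ⟨k, rfl⟩ := hd
  have := key (m - r) k
  have e : r + (m - r) = m := by omega
  rw [e] at this
  rw [← this]
  ring_nf


lemma nsmul'_idem {x : S} (h : x + x = x) (n : ℕ) : nsmul' S n x = x := by
  induction n with
  | zero => rfl
  | succ n ih => show x + nsmul' S n x = x; rw [ih, h]

end Finite

section Fin2

variable [Fintype S] [Nonempty S]

lemma expS_mem : 0 < expS S ∧ ∀ x : S, period S x ∣ expS S := by
  have : Finite S := inferInstance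
  have hne : {n : ℕ | 0 < n ∧ ∀ x : S, period S x ∣ n}.Nonempty := by
    refine ⟨∏ x : S, period S x, ?_, ?_⟩
    · exact Finset.prod_pos fun x _ => period_pos x
    · exact fun x => Finset.dvd_prod_of_mem _ (Finset.mem_univ x)
  exact Nat.sInf_mem hne

lemma exists_uniform_N :
    ∃ N : ℕ, 0 < N ∧ (∀ x : S, period S x ∣ N) ∧ (∀ x : S, rho S x ≤ N) ∧
      ∀ x : S, nsmul' S (N - 1) x = eIdem S x := by
  classical
  have hfin : Finite S := inferInstance
  refine ⟨expS S * ∏ x : S, rho S x, ?_, ?_, ?_, ?_⟩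
  · exact Nat.mul_pos (expS_mem (S := S)).1 (Finset.prod_pos fun x _ => rho_pos x)
  · exact fun x => ((expS_mem (S := S)).2 x).mul_right _
  · intro x
    calc rho S x ≤ ∏ y : S, rho S y :=
          Nat.le_of_dvd (Finset.prod_pos fun y _ => rho_pos y)
            (Finset.dvd_prod_of_mem _ (Finset.mem_univ x))
      _ ≤ expS S * ∏ y : S, rho S y :=
          Nat.le_mul_of_pos_left _ (expS_mem (S := S)).1
  · intro x
    set N := expS S * ∏ y : S, rho S y with hN
    have hN0 : 0 < N := Nat.mul_pos (expS_mem (S := S)).1 (Finset.prod_pos fun y _ => rho_pos y)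
    have hπN : period S x ∣ N := ((expS_mem (S := S)).2 x).mul_right _
    have hρN : rho S x ≤ N :=
      le_trans (Nat.le_of_dvd (Finset.prod_pos fun y _ => rho_pos y)
        (Finset.dvd_prod_of_mem _ (Finset.mem_univ x)))
        (Nat.le_mul_of_pos_left _ (expS_mem (S := S)).1)
    have hπρ : period S x ∣ rho S x := period_dvd_rho x
    rw [eIdem_eq]
    apply nsmul'_congr_mod
    · omega
    · omega
    · -- (N-1) % π = (ρ-1) % π
      have hπ0 : 0 < period S x := period_pos x
      have hρ0 : 0 < rho S x := rho_pos x
      have hm : N ≡ rho S x [MOD period S x] := by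
        show N % period S x = rho S x % period S x
        rw [Nat.mod_eq_zero_of_dvd hπN, Nat.mod_eq_zero_of_dvd hπρ]
      have : (N - 1) + 1 ≡ (rho S x - 1) + 1 [MOD period S x] := by
        rw [Nat.sub_add_cancel hN0, Nat.sub_add_cancel hρ0]
        exact hm
      exact Nat.ModEq.add_right_cancel' 1 this

lemma eIdem_add (x y : S) : eIdem S (x + y) = eIdem S x + eIdem S y := by
  obtain ⟨N, hN0, hπ, hρ, hE⟩ := exists_uniform_N (S := S)
  rw [← hE x, ← hE y, ← hE (x + y), nsmul'_add_distrib]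

end Fin2

end Aux

namespace Aux

variable {S : Type*} [AddCommSemigroup S]

lemma smul_coe (z : S) (k : ℕ) :
    (k + 1) • ((z : WithZero S)) = ((nsmul' S k z : S) : WithZero S) := by
  induction k with
  | zero => rw [zero_add, one_smul]; rfl
  | succ k ih =>
      rw [succ_nsmul, ih, ← WithZero.coe_add]
      show _ = ((nsmul' S (k+1) z : S) : WithZero S)
      have : nsmul' S (k + 1) z = z + nsmul' S k z := rfl
      rw [this, add_comm]

variable {R : Type*} [CommRing R]

lemma facX_pow_rho [Fintype S] [Nonempty S] (p : ℕ) (hp : p.Prime) [CharP R p]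
    (hexp : ∃ t : ℕ, expS S = p ^ t) (a : S) :
    (facX R a 1) ^ (rho S a) = 0 := by
  classical
  obtain ⟨t, ht⟩ := hexp
  haveI : Fact p.Prime := ⟨hp⟩
  set π := period S a with hπdef
  set ρ := rho S a with hρdef
  set r := ρ - 1 with hrdef
  have hπ0 : 0 < π := period_pos a
  have hρ0 : 0 < ρ := rho_pos a
  have hπρ : π ∣ ρ := period_dvd_rho a
  have hπρle : π ≤ ρ := Nat.le_of_dvd hρ0 hπρ
  have hπdvd : π ∣ p ^ t := ht ▸ (expS_mem (S := S)).2 a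
  obtain ⟨u, _, hπu⟩ := (Nat.dvd_prime_pow hp).mp hπdvd
  haveI : NeZero π := ⟨hπ0.ne'⟩
  set A := AddMonoidAlgebra R (ZMod π) with hAdef
  haveI hchar : CharP A p := by
    apply charP_of_injective_ringHom
      (f := (AddMonoidAlgebra.singleZeroRingHom : R →+* A)) ?_ p
    intro x y hxy
    exact (AddMonoidAlgebra.single_right_injective : (AddMonoidAlgebra.single (0 : ZMod π) : R → A).Injective) hxy
  set U : A := AddMonoidAlgebra.single (1 : ZMod π) (1 : R) with hUdef
  have hUπ : U ^ π = 1 := by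
    rw [AddMonoidAlgebra.single_pow, one_pow]
    have h1 : π • (1 : ZMod π) = 0 := by
      rw [nsmul_eq_mul, mul_one]; exact ZMod.natCast_self π
    rw [h1, ← AddMonoidAlgebra.one_def]
  have hU : (U - 1) ^ π = 0 := by
    have h2 : (U - 1) ^ (p ^ u) = U ^ (p ^ u) - 1 ^ (p ^ u) := sub_pow_char_pow U 1 u
    rw [← hπu] at h2
    rw [h2, hUπ, one_pow, sub_self]
  have hUρ : (U - 1) ^ ρ = 0 := pow_eq_zero_of_le hπρle hU
  have hidem : eIdem S a + eIdem S a = eIdem S a := eIdem_spec a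
  have hE : eIdem S a = nsmul' S r a := eIdem_eq a
  set h : ZMod π → WithZero S := fun j => ((nsmul' S (r + j.val) a : S) : WithZero S)
    with hhdef
  set c : ℕ → R := fun i => (-1 : R) ^ (i + ρ) * (ρ.choose i : R) with hcdef
  have htermA : ∀ i ∈ Finset.range (ρ + 1),
      (-1 : A) ^ (i + ρ) * U ^ i * 1 ^ (ρ - i) * (ρ.choose i : A)
        = AddMonoidAlgebra.single ((i : ZMod π)) (c i) := by
    intro i _
    have hUi : U ^ i = AddMonoidAlgebra.single ((i : ZMod π)) (1 : R) := by
      rw [AddMonoidAlgebra.single_pow, one_pow]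
      congr 1
      rw [nsmul_eq_mul, mul_one]
    have hm1 : (-1 : A) ^ (i + ρ) = AddMonoidAlgebra.single (0 : ZMod π) ((-1 : R) ^ (i + ρ)) := by
      have : (-1 : A) = AddMonoidAlgebra.single (0 : ZMod π) (-1 : R) := by
        rw [AddMonoidAlgebra.one_def]; exact (AddMonoidAlgebra.single_neg _ _).symm
      rw [this, AddMonoidAlgebra.single_pow, smul_zero]
    have hC : ((ρ.choose i : ℕ) : A) = AddMonoidAlgebra.single (0 : ZMod π) ((ρ.choose i : ℕ) : R) := by
      rw [← map_natCast (AddMonoidAlgebra.singleZeroRingHom : R →+* A) (ρ.choose i)]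
      rfl
    rw [one_pow, mul_one, hUi, hm1, hC, AddMonoidAlgebra.single_mul_single,
      AddMonoidAlgebra.single_mul_single]
    simp [hcdef]
  have htermS : ∀ i ∈ Finset.range (ρ + 1),
      (-1 : SAlg R S) ^ (i + ρ) * (Xm R a 1) ^ i * (Xm R (eIdem S a) 1) ^ (ρ - i)
          * (ρ.choose i : SAlg R S)
        = AddMonoidAlgebra.single (h (i : ZMod π)) (c i) := by
    intro i hi
    have hjval : ((i : ZMod π)).val = i % π := ZMod.val_natCast π i
    have hexpo : i • (↑a : WithZero S) + (ρ - i) • (↑(eIdem S a) : WithZero S)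
        = ((nsmul' S (r + i % π) a : S) : WithZero S) := by
      rcases Nat.eq_zero_or_pos i with rfl | hi0
      · rw [zero_smul, zero_add, Nat.zero_mod, Nat.add_zero]
        have : ρ - 0 = r + 1 := by omega
        rw [this, smul_coe, nsmul'_idem hidem, hE]
      · rcases eq_or_lt_of_le (Nat.lt_succ_iff.mp (Finset.mem_range.mp hi)) with hiρ | hilt
        · rw [hiρ, Nat.mod_eq_zero_of_dvd hπρ, Nat.add_zero, Nat.sub_self, zero_smul, add_zero]
          have hρr : ρ = r + 1 := by omega
          rw [hρr, smul_coe]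
        · -- 0 < i < ρ
          have e1 : i = (i - 1) + 1 := by omega
          have e2 : ρ - i = (ρ - i - 1) + 1 := by omega
          have l1 : i • (↑a : WithZero S) = ((nsmul' S (i - 1) a : S) : WithZero S) := by
            conv_lhs => rw [e1]
            exact smul_coe a (i - 1)
          have l2 : (ρ - i) • (↑(eIdem S a) : WithZero S)
              = ((nsmul' S r a : S) : WithZero S) := by
            conv_lhs => rw [e2]
            rw [smul_coe, nsmul'_idem hidem, hE]
          rw [l1, l2, ← WithZero.coe_add, ← nsmul'_add]
          have e3 : (i - 1) + r + 1 = r + i := by omega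
          rw [e3]
          have := nsmul'_congr_mod (x := a) (m := r + i) (m' := r + i % π) ?_ ?_ ?_
          · rw [this]
          · omega
          · omega
          · simp [Nat.add_mod, hπdef]
    have hmul : (Xm R a 1 : SAlg R S) ^ i * (Xm R (eIdem S a) 1) ^ (ρ - i)
        = AddMonoidAlgebra.single (h (i : ZMod π)) (1 : R) := by
      unfold Xm
      rw [AddMonoidAlgebra.single_pow, AddMonoidAlgebra.single_pow, one_pow, one_pow,
        AddMonoidAlgebra.single_mul_single, one_mul]
      congr 1
      rw [hhdef]
      show _ = ((nsmul' S (r + ((i : ZMod π)).val) a : S) : WithZero S)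
      rw [hjval]
      exact hexpo
    have hm1 : (-1 : SAlg R S) ^ (i + ρ)
        = AddMonoidAlgebra.single (0 : WithZero S) ((-1 : R) ^ (i + ρ)) := by
      have : (-1 : SAlg R S) = AddMonoidAlgebra.single (0 : WithZero S) (-1 : R) := by
        rw [AddMonoidAlgebra.one_def]; exact (AddMonoidAlgebra.single_neg _ _).symm
      rw [this, AddMonoidAlgebra.single_pow, smul_zero]
    have hC : ((ρ.choose i : ℕ) : SAlg R S)
        = AddMonoidAlgebra.single (0 : WithZero S) ((ρ.choose i : ℕ) : R) := by
      rw [← map_natCast (AddMonoidAlgebra.singleZeroRingHom : R →+* SAlg R S) (ρ.choose i)]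
      rfl
    rw [mul_assoc ((-1 : SAlg R S) ^ (i + ρ)), hmul, hm1, hC,
      AddMonoidAlgebra.single_mul_single, AddMonoidAlgebra.single_mul_single]
    simp [hcdef]
  have hfac : facX R a 1 = Xm R a 1 - Xm R (eIdem S a) 1 := rfl
  have expandS : (facX R a 1) ^ ρ
      = ∑ i ∈ Finset.range (ρ + 1), AddMonoidAlgebra.single (h (i : ZMod π)) (c i) := by
    rw [hfac, sub_pow]
    exact Finset.sum_congr rfl htermS
  have expandA : (U - 1) ^ ρ
      = ∑ i ∈ Finset.range (ρ + 1), AddMonoidAlgebra.single ((i : ZMod π)) (c i) := by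
    rw [sub_pow]
    exact Finset.sum_congr rfl htermA
  have final : (facX R a 1) ^ ρ = AddMonoidAlgebra.mapDomain h ((U - 1) ^ ρ) := by
    rw [expandS, expandA]
    refine Eq.trans ?_ (map_sum (AddMonoidHom.mk ⟨AddMonoidAlgebra.mapDomain h,
      AddMonoidAlgebra.mapDomain_zero h⟩ (AddMonoidAlgebra.mapDomain_add h) : A →+ SAlg R S)
      _ _).symm
    exact Finset.sum_congr rfl fun i _ => (AddMonoidAlgebra.mapDomain_single).symm
  rw [final, hUρ]
  exact AddMonoidAlgebra.mapDomain_zero h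


lemma facX_add (x y : S) [Fintype S] [Nonempty S] :
    facX R (x + y) 1 = Xm R x 1 * facX R y 1 + Xm R (eIdem S y) 1 * facX R x 1 := by
  unfold facX Xm
  rw [mul_sub, mul_sub, AddMonoidAlgebra.single_mul_single, AddMonoidAlgebra.single_mul_single,
    AddMonoidAlgebra.single_mul_single, AddMonoidAlgebra.single_mul_single]
  rw [← WithZero.coe_add, ← WithZero.coe_add, ← WithZero.coe_add, ← WithZero.coe_add]
  rw [eIdem_add x y]
  rw [show (eIdem S y : S) + x = x + eIdem S y from add_comm _ _,
    show (eIdem S y : S) + eIdem S x = eIdem S x + eIdem S y from add_comm _ _]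
  simp only [mul_one]
  ring

lemma facX_repr [Fintype S] [Nonempty S] {A : Finset S}
    (hA : AddSubsemigroup.closure (↑A : Set S) = ⊤) (s : S) :
    ∃ c : S → SAlg R S, facX R s 1 = ∑ b ∈ A, c b * facX R b 1 := by
  classical
  have hs : s ∈ AddSubsemigroup.closure (↑A : Set S) := by
    rw [hA]; trivial
  induction hs using AddSubsemigroup.closure_induction with
  | mem x hx =>
      refine ⟨fun b => if b = x then 1 else 0, ?_⟩
      have hco : ∀ b ∈ A, (if b = x then (1 : SAlg R S) else 0) * facX R b 1
          = if b = x then facX R b 1 else 0 := fun b _ => by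
        by_cases h : b = x <;> simp [h]
      rw [Finset.sum_congr rfl hco, Finset.sum_ite_eq' A x (fun b => facX R b 1),
        if_pos (Finset.mem_coe.mp hx)]
  | add x y hx hy ihx ihy =>
      obtain ⟨cx, hcx⟩ := ihx
      obtain ⟨cy, hcy⟩ := ihy
      refine ⟨fun b => Xm R x 1 * cy b + Xm R (eIdem S y) 1 * cx b, ?_⟩
      rw [facX_add x y, hcy, hcx, Finset.mul_sum, Finset.mul_sum, ← Finset.sum_add_distrib]
      exact Finset.sum_congr rfl fun b _ => by ring

lemma prod_eq_zero_of_repr {ι : Type*} {Rg : Type*} [CommRing Rg] [DecidableEq ι]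
    (B : Finset ι) (f : ι → Rg) (ν : ι → ℕ)
    (hnil : ∀ b ∈ B, f b ^ ν b = 0) {ℓ : ℕ}
    (hl : 1 + ∑ b ∈ B, (ν b - 1) ≤ ℓ)
    (g : Fin ℓ → Rg) (c : Fin ℓ → ι → Rg)
    (hg : ∀ i, g i = ∑ b ∈ B, c i b * f b) :
    ∏ i, g i = 0 := by
  classical
  have h1 : ∏ i, g i = ∑ pf ∈ (Finset.univ : Finset (Fin ℓ)).pi (fun _ => B),
      ∏ x ∈ Finset.univ.attach,
        (c x.1 (pf x.1 (Finset.mem_univ x.1)) * f (pf x.1 (Finset.mem_univ x.1))) := by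
    rw [Finset.prod_congr rfl fun i _ => hg i]
    exact Finset.prod_sum _ _ _
  rw [h1]
  apply Finset.sum_eq_zero
  intro pf hpf
  set q : Fin ℓ → ι := fun i => pf i (Finset.mem_univ i) with hq
  have hqB : ∀ i, q i ∈ B := fun i => Finset.mem_pi.mp hpf i _
  rw [Finset.prod_mul_distrib]
  have h2 : ∏ x ∈ Finset.univ.attach, f (q x.1) = ∏ i : Fin ℓ, f (q i) :=
    Finset.prod_attach Finset.univ (fun i => f (q i))
  rw [h2]
  suffices h3 : ∏ i : Fin ℓ, f (q i) = 0 by rw [h3, mul_zero]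
  have hcard : ∃ b ∈ B, ν b ≤ (Finset.univ.filter (fun i => q i = b)).card := by
    by_contra hcon
    push_neg at hcon
    have hsum : (Finset.univ : Finset (Fin ℓ)).card
        = ∑ b ∈ B, (Finset.univ.filter fun i => q i = b).card :=
      Finset.card_eq_sum_card_fiberwise fun i _ => hqB i
    have hle : ∑ b ∈ B, (Finset.univ.filter fun i => q i = b).card ≤ ∑ b ∈ B, (ν b - 1) :=
      Finset.sum_le_sum fun b hb => by have := hcon b hb; omega
    rw [Finset.card_univ, Fintype.card_fin] at hsum
    omega
  obtain ⟨b, hbB, hbν⟩ := hcard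
  rw [← Finset.prod_fiberwise_of_maps_to (fun i _ => hqB i) (fun i => f (q i))]
  apply Finset.prod_eq_zero hbB
  have hconst : ∏ i ∈ Finset.univ.filter (fun i => q i = b), f (q i)
      = f b ^ (Finset.univ.filter (fun i => q i = b)).card := by
    rw [Finset.prod_congr rfl (fun i hi => by rw [(Finset.mem_filter.mp hi).2]),
      Finset.prod_const]
  rw [hconst]
  exact pow_eq_zero_of_le hbν (hnil b hbB)

end Aux

/-- `d(S,R) ≤ Λ(S) - 1` in characteristic `p`. -/
theorem stmt8 (p : ℕ) (hp : p.Prime) (S : Type*) [AddCommSemigroup S] [Fintype S] [Nonempty S]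
    (hexp : ∃ t : ℕ, expS S = p ^ t)
    (R : Type*) [CommRing R] [CharP R p] :
    dd R S ≤ (Lam S : ℕ∞) - 1 := by
  classical
  open Aux in
  have hcl : AddSubsemigroup.closure ((Finset.univ : Finset S) : Set S) = ⊤ := by
    rw [Finset.coe_univ]; exact AddSubsemigroup.closure_univ
  have hne : {n : ℕ | ∃ A : Finset S,
      AddSubsemigroup.closure (↑A : Set S) = ⊤ ∧ n = 1 + ∑ a ∈ A, (rho S a - 1)}.Nonempty :=
    ⟨_, Finset.univ, hcl, rfl⟩
  have hΛmem : ∃ A : Finset S, AddSubsemigroup.closure (↑A : Set S) = ⊤ ∧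
      Lam S = 1 + ∑ a ∈ A, (rho S a - 1) := Nat.sInf_mem hne
  obtain ⟨A, hAgen, hΛeq⟩ := hΛmem
  have hnontriv : Nontrivial R := CharP.nontrivial_of_char_ne_one hp.ne_one
  refine sSup_le ?_
  rintro n ⟨ℓ, rfl, s, hs⟩
  suffices hℓ : ℓ ≤ Lam S - 1 by
    calc (ℓ : ℕ∞) ≤ ((Lam S - 1 : ℕ) : ℕ∞) := by exact_mod_cast hℓ
      _ = (Lam S : ℕ∞) - 1 := by rw [ENat.coe_sub, Nat.cast_one]
  by_contra hcon
  push_neg at hcon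
  have hΛℓ : Lam S ≤ ℓ := by omega
  apply hs (fun _ => (1 : R)) (fun i => one_ne_zero)
  have hrepr : ∀ i : Fin ℓ, ∃ c : S → SAlg R S,
      facX R (s i) 1 = ∑ b ∈ A, c b * facX R b 1 := fun i => facX_repr hAgen (s i)
  choose c hc using hrepr
  have := prod_eq_zero_of_repr A (fun b => facX R b 1) (fun b => rho S b)
    (fun b _ => facX_pow_rho p hp hexp b)
    (by rw [hΛeq] at hΛℓ; exact hΛℓ) (fun i => facX R (s i) 1) c hc
  exact this

end ZS
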